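/- Let L be a complex Banach Lie algebra and let J be a closed linear subspace of L such that f(J) ⊆ J for every continuous Lie algebra automorphism f of L (i.e. every bijective continuous Lie algebra homomorphism of L whose inverse is continuous). Then δ(J) ⊆ J for every continuous Lie derivation δ of L; in particular ⁅a, x⁆ ∈ J for all a ∈ L and x ∈ J, so J is a closed Lie ideal of L. -/

import Mathlib

open NormedSpace

/-- In a complex Banach Lie algebra, a closed subspace invariant under all continuous
Lie automorphisms is invariant under all continuous Lie derivations; in particular it is
a (closed) Lie ideal. -/
theorem stmt_0 {L : Type*} [LieRing L] [LieAlgebra ℂ L] [MetricSpace L] [CompleteSpace L]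
    (hdist : ∀ x y z : L, dist (x + z) (y + z) = dist x y)
    (hnorm : ∀ (c : ℂ) (x : L), dist (c • x) 0 = ‖c‖ * dist x 0)
    (hbracket : Continuous fun p : L × L => ⁅p.1, p.2⁆)
    (J : Submodule ℂ L) (hJcl : IsClosed (J : Set L))
    (hinv : ∀ f : L ≃ₗ⁅ℂ⁆ L, Continuous (f : L → L) → Continuous (f.symm : L → L) →
      ∀ x ∈ J, f x ∈ J) :
    (∀ δ : LieDerivation ℂ L L, Continuous (δ : L → L) → ∀ x ∈ J, δ x ∈ J) ∧
    (∀ a : L, ∀ x ∈ J, ⁅a, x⁆ ∈ J) := by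
  letI : Norm L := ⟨fun x => dist x 0⟩
  have hde : ∀ x y : L, dist x y = dist (x - y) 0 := by
    intro x y
    have h := hdist (x - y) 0 y
    rw [sub_add_cancel, zero_add] at h
    exact h
  letI : NormedAddCommGroup L := @NormedAddCommGroup.mk L ‹Norm L› inferInstance ‹MetricSpace L›
    (fun x y => by
      rw [dist_comm]
      have h := hdist y x (-x)
      rw [add_neg_cancel] at h
      show dist y x = dist (-x + y) 0
      rw [← h, add_comm])
  letI : NormedSpace ℂ L :=
    { (inferInstance : Module ℂ L) with
      norm_smul_le := fun c x => le_of_eq (hnorm c x) }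
  -- boundedness of the bracket
  obtain ⟨ε, hε, hb⟩ : ∃ ε > 0, ∀ p : L × L, dist p (0, 0) < ε → ‖⁅p.1, p.2⁆‖ < 1 := by
    obtain ⟨ε, hε, h⟩ := Metric.continuous_iff.mp hbracket (0, 0) 1 one_pos
    refine ⟨ε, hε, fun p hp => ?_⟩
    have := h p hp
    simpa [dist_eq_norm] using this
  have hbound : ∀ x y : L, ‖⁅x, y⁆‖ ≤ (4 / (ε * ε)) * ‖x‖ * ‖y‖ := by
    intro x y
    rcases eq_or_ne x 0 with rfl | hx
    · simp
    rcases eq_or_ne y 0 with rfl | hy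
    · simp
    have hxn : 0 < ‖x‖ := norm_pos_iff.mpr hx
    have hyn : 0 < ‖y‖ := norm_pos_iff.mpr hy
    set c : ℂ := ((ε / (2 * ‖x‖) : ℝ) : ℂ) with hc
    set d : ℂ := ((ε / (2 * ‖y‖) : ℝ) : ℂ) with hd'
    have hcn : ‖c‖ = ε / (2 * ‖x‖) := by
      rw [hc, Complex.norm_real, Real.norm_eq_abs]
      exact abs_of_pos (by positivity)
    have hdn : ‖d‖ = ε / (2 * ‖y‖) := by
      rw [hd', Complex.norm_real, Real.norm_eq_abs]
      exact abs_of_pos (by positivity)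
    have h1 : ‖c • x‖ = ε / 2 := by
      rw [norm_smul, hcn]
      field_simp
    have h2 : ‖d • y‖ = ε / 2 := by
      rw [norm_smul, hdn]
      field_simp
    have hp : dist ((c • x, d • y) : L × L) (0, 0) < ε := by
      rw [Prod.dist_eq]
      simp only [dist_zero_right, h1, h2, max_self]
      linarith
    have h3 := hb (c • x, d • y) hp
    have h4 : ⁅c • x, d • y⁆ = (c * d) • ⁅x, y⁆ := by
      rw [smul_lie, lie_smul, smul_smul]
    rw [h4, norm_smul, norm_mul, hcn, hdn] at h3
    have h6 : 0 ≤ ‖⁅x, y⁆‖ := norm_nonneg _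
    have hεε : (0:ℝ) < ε * ε := by positivity
    rw [div_mul_div_comm] at h3
    -- h3 : (ε * ε) / (2‖x‖ * (2‖y‖)) * ‖⁅x,y⁆‖ < 1
    have h7 : (ε * ε) * ‖⁅x, y⁆‖ ≤ 2 * ‖x‖ * (2 * ‖y‖) := by
      have hpos : (0:ℝ) < 2 * ‖x‖ * (2 * ‖y‖) := by positivity
      have h3' : (ε * ε) * ‖⁅x, y⁆‖ / (2 * ‖x‖ * (2 * ‖y‖)) < 1 :=
        (div_mul_eq_mul_div (ε * ε) (2 * ‖x‖ * (2 * ‖y‖)) ‖⁅x, y⁆‖) ▸ h3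
      exact le_of_lt ((div_lt_one hpos).mp h3')
    have h8 : ‖⁅x, y⁆‖ ≤ (2 * ‖x‖ * (2 * ‖y‖)) / (ε * ε) := by
      rw [le_div_iff₀ hεε]
      nlinarith [h7]
    calc ‖⁅x, y⁆‖ ≤ (2 * ‖x‖ * (2 * ‖y‖)) / (ε * ε) := h8
      _ = (4 / (ε * ε)) * ‖x‖ * ‖y‖ := by ring
  set B : L →L[ℂ] L →L[ℂ] L :=
    LinearMap.mkContinuous₂
      (LinearMap.mk₂ ℂ (fun x y : L => ⁅x, y⁆) add_lie smul_lie lie_add lie_smul)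
      (4 / (ε * ε)) hbound with hBdef
  have hB : ∀ x y : L, B x y = ⁅x, y⁆ := fun x y => rfl
  -- main step: every continuous derivation preserves J
  have main : ∀ δ : LieDerivation ℂ L L, Continuous (δ : L → L) → ∀ x ∈ J, δ x ∈ J := by
    intro δ hδ
    set D : L →L[ℂ] L := { toLinearMap := (δ : L →ₗ[ℂ] L), cont := hδ } with hDdef
    have hDapp : ∀ z : L, D z = δ z := fun z => rfl
    set e : ℂ → (L →L[ℂ] L) := fun t => exp (t • D) with he
    have hmul : ∀ s t : ℂ, e s * e t = e (s + t) := by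
      intro s t
      have hcmt : Commute (s • D) (t • D) := ((Commute.refl D).smul_left s).smul_right t
      simp only [he]
      rw [← exp_add_of_commute_of_mem_ball (𝕂 := ℂ) hcmt
        ((expSeries_radius_eq_top ℂ (L →L[ℂ] L)).symm ▸ edist_lt_top _ _)
        ((expSeries_radius_eq_top ℂ (L →L[ℂ] L)).symm ▸ edist_lt_top _ _), add_smul]
    have hone : e 0 = 1 := by simp [he, exp_zero]
    have hcancel : ∀ t : ℂ, ∀ z : L, e t (e (-t) z) = z := by
      intro t z
      have h1 : e t * e (-t) = 1 := by rw [hmul, add_neg_cancel, hone]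
      calc e t (e (-t) z) = (e t * e (-t)) z := rfl
        _ = z := by rw [h1]; rfl
    have heneg : ∀ s : ℂ, exp (s • (-D)) = e (-s) := by
      intro s
      simp only [he]
      rw [smul_neg, ← neg_smul]
    have hd : ∀ (x : L) (t : ℂ), HasDerivAt (fun s => e s x) (D (e t x)) t := by
      intro x t
      have h1 : HasDerivAt (fun s : ℂ => exp (s • D)) (D * e t) t :=
        hasDerivAt_exp_smul_const' D t
      have h2 := h1.clm_apply (hasDerivAt_const t x)
      simpa [ContinuousLinearMap.mul_apply] using h2
    have hkey : ∀ (t : ℂ) (a b : L), e t ⁅a, b⁆ = ⁅e t a, e t b⁆ := by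
      intro t a b
      set g : ℂ → L := fun s => e (-s) (B (e s a) (e s b)) with hg
      have hder : ∀ s : ℂ, HasDerivAt g 0 s := by
        intro s
        have hu := hd a s
        have hv := hd b s
        have hBu : HasDerivAt (fun s' => B (e s' a)) (B (D (e s a))) s := by
          have h3 := (hasDerivAt_const s B).clm_apply hu
          simpa using h3
        have hv2 : HasDerivAt (fun s' => B (e s' a) (e s' b))
            (B (D (e s a)) (e s b) + B (e s a) (D (e s b))) s := hBu.clm_apply hv
        have hE : HasDerivAt (fun s' : ℂ => e (-s')) (-(D * e (-s))) s := by
          have h2 : HasDerivAt (fun s' : ℂ => exp (s' • (-D))) ((-D) * exp (s • (-D))) s :=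
            hasDerivAt_exp_smul_const' (-D) s
          have heq : (fun s' : ℂ => exp (s' • (-D))) = fun s' : ℂ => e (-s') := by
            funext s'; exact heneg s'
          rw [heq, heneg, neg_mul] at h2
          exact h2
        have hder0 : HasDerivAt g
            ((-(D * e (-s))) (B (e s a) (e s b)) +
              (e (-s)) (B (D (e s a)) (e s b) + B (e s a) (D (e s b)))) s :=
          hE.clm_apply hv2
        have hDw : B (D (e s a)) (e s b) + B (e s a) (D (e s b)) = D (B (e s a) (e s b)) := by
          simp only [hB, hDapp]
          rw [LieDerivation.apply_lie_eq_add]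
          abel
        have hcomm : D * e (-s) = e (-s) * D := by
          have h4 : Commute D ((-s) • D) := (Commute.refl D).smul_right (-s)
          have h5 : Commute D (e (-s)) := by
            have := h4.exp_right
            simpa [he] using this
          exact h5.eq
        have hzero : (-(D * e (-s))) (B (e s a) (e s b)) +
            (e (-s)) (B (D (e s a)) (e s b) + B (e s a) (D (e s b))) = 0 := by
          rw [hDw]
          have h6 : (D * e (-s)) (B (e s a) (e s b)) = (e (-s)) (D (B (e s a) (e s b))) := by
            rw [hcomm]; rfl
          simp [ContinuousLinearMap.neg_apply, h6]
        rwa [hzero] at hder0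
      have hconst : g t = g 0 :=
        is_const_of_deriv_eq_zero (fun s => (hder s).differentiableAt)
          (fun s => (hder s).deriv) t 0
      have hg0 : g 0 = ⁅a, b⁆ := by
        simp [hg, hone, ContinuousLinearMap.one_apply, hB]
      have h7 := congrArg (e t) (hconst.trans hg0)
      have h8 : e t (g t) = B (e t a) (e t b) := hcancel t _
      rw [h8] at h7
      rw [hB] at h7
      exact h7.symm
    -- invariance of J under each `e t`
    have hFJ : ∀ t : ℂ, ∀ x ∈ J, e t x ∈ J := by
      intro t x hx
      let F : L ≃ₗ⁅ℂ⁆ L :=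
        { toLinearMap := ((e t : L →L[ℂ] L) : L →ₗ[ℂ] L)
          map_lie' := fun {a b} => hkey t a b
          invFun := fun z => e (-t) z
          left_inv := fun z => by
            have h9 := hcancel (-t) z
            rw [neg_neg] at h9
            exact h9
          right_inv := fun z => hcancel t z }
      have hFcoe : (F : L → L) = fun z => e t z := rfl
      have hc1 : Continuous (F : L → L) := by
        rw [hFcoe]; exact (e t).continuous
      have hsymmfun : (F.symm : L → L) = fun z => e (-t) z := by
        funext z
        have h10 : F (e (-t) z) = z := hcancel t z
        calc F.symm z = F.symm (F (e (-t) z)) := by rw [h10]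
          _ = e (-t) z := F.symm_apply_apply _
      have hc2 : Continuous (F.symm : L → L) := by
        rw [hsymmfun]; exact (e (-t)).continuous
      exact hinv F hc1 hc2 x hx
    -- conclude via the derivative at 0
    intro x hx
    have hder0 : HasDerivAt (fun t : ℂ => e t x) (D x) 0 := by
      have h11 := hd x 0
      rwa [hone, ContinuousLinearMap.one_apply] at h11
    have hT := hasDerivAt_iff_tendsto_slope.mp hder0
    have hmem : ∀ t : ℂ, slope (fun t : ℂ => e t x) 0 t ∈ J := by
      intro t
      rw [slope_def_module]
      refine Submodule.smul_mem J _ (Submodule.sub_mem J (hFJ t x hx) ?_)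
      rw [hone]
      simpa using hx
    have h12 : D x ∈ J := hJcl.mem_of_tendsto hT (Filter.Eventually.of_forall hmem)
    exact h12
  refine ⟨main, ?_⟩
  intro a x hx
  have hcont : Continuous ((LieDerivation.ad ℂ L a : LieDerivation ℂ L L) : L → L) := by
    have h1 : ((LieDerivation.ad ℂ L a : LieDerivation ℂ L L) : L → L) =
        fun x : L => ⁅a, x⁆ := by
      funext z
      simp [LieDerivation.ad_apply_apply]
    rw [h1]
    exact hbracket.comp (continuous_const.prodMk continuous_id)
  have := main (LieDerivation.ad ℂ L a) hcont x hx
  simpa [LieDerivation.ad_apply_apply] using this
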